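/- arXiv:2302.13059 — 3 statements merged into one kernel-verified Lean document; each statement's English description precedes it below -/
import Mathlib

section
/- The metric space (Sym⁺(m), d_LE) is complete. -/
open Matrix Filter

/-- The matrix exponential on `m × m` real matrices. -/
noncomputable def mexp {m : ℕ} (A : Matrix (Fin m) (Fin m) ℝ) : Matrix (Fin m) (Fin m) ℝ :=
  NormedSpace.exp A

/-- The Frobenius norm of an `m × m` real matrix. -/
noncomputable def frobNorm {m : ℕ} (A : Matrix (Fin m) (Fin m) ℝ) : ℝ :=
  Real.sqrt (∑ i, ∑ j, (A i j) ^ 2)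

/-- Each entry is bounded by the Frobenius norm. -/
lemma abs_entry_le_frobNorm {m : ℕ} (X : Matrix (Fin m) (Fin m) ℝ) (i j : Fin m) :
    |X i j| ≤ frobNorm X := by
  have h : X i j ^ 2 ≤ ∑ i', ∑ j', X i' j' ^ 2 := by
    calc X i j ^ 2 ≤ ∑ j', X i j' ^ 2 :=
          Finset.single_le_sum (f := fun j' => X i j' ^ 2) (fun _ _ => sq_nonneg _) (Finset.mem_univ j)
      _ ≤ ∑ i', ∑ j', X i' j' ^ 2 :=
          Finset.single_le_sum (f := fun i' => ∑ j', X i' j' ^ 2)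
            (fun i' _ => Finset.sum_nonneg fun _ _ => sq_nonneg _) (Finset.mem_univ i)
  have := Real.sqrt_le_sqrt h
  rwa [Real.sqrt_sq_eq_abs] at this

/-- A real symmetric matrix is Hermitian. -/
lemma isSymm_isHermitian {m : ℕ} {A : Matrix (Fin m) (Fin m) ℝ} (h : A.IsSymm) :
    A.IsHermitian := by
  rw [Matrix.IsHermitian, conjTranspose_eq_transpose_of_trivial, h]

/-- The matrix exponential is injective on real symmetric matrices. -/
lemma mexp_injective {m : ℕ} {A B : Matrix (Fin m) (Fin m) ℝ}
    (hA : A.IsHermitian) (hB : B.IsHermitian) (h : mexp A = mexp B) : A = B := by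
  letI : NormedRing (Matrix (Fin m) (Fin m) ℝ) := Matrix.instL2OpNormedRing
  letI : NormedAlgebra ℝ (Matrix (Fin m) (Fin m) ℝ) := Matrix.instL2OpNormedAlgebra
  have hA' : IsSelfAdjoint A := hA
  have hB' : IsSelfAdjoint B := hB
  have h1 := CFC.log_exp A hA'
  have h2 := CFC.log_exp B hB'
  have h' : (NormedSpace.exp A : Matrix (Fin m) (Fin m) ℝ) = NormedSpace.exp B := h
  rw [← h1, ← h2, h']

/-- The matrix exponential of a real symmetric matrix is positive definite. -/
lemma mexp_posDef {m : ℕ} {X : Matrix (Fin m) (Fin m) ℝ} (hX : X.IsHermitian) :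
    (mexp X).PosDef := by
  have hXh : ((1/2 : ℝ) • X).IsHermitian := by
    rw [Matrix.IsHermitian, conjTranspose_smul, hX.eq]; simp
  set B := mexp ((1/2 : ℝ) • X) with hBdef
  have hBh : B.IsHermitian := by
    rw [hBdef]
    show (mexp _)ᴴ = mexp _
    rw [mexp, ← Matrix.exp_conjTranspose, hXh]
  have hsplit : mexp X = Bᴴ * B := by
    rw [hBh, hBdef, mexp, mexp, ← Matrix.exp_add_of_commute _ _ (Commute.refl _)]
    congr 1
    rw [← add_smul]
    norm_num
  have hu : IsUnit (mexp X) := Matrix.isUnit_exp X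
  have hps : (mexp X).PosSemidef := hsplit ▸ Matrix.posSemidef_conjTranspose_mul_self B
  refine Matrix.posDef_iff_dotProduct_mulVec.mpr ⟨hps.1, fun x hx => ?_⟩
  refine lt_of_le_of_ne ((Matrix.posSemidef_iff_dotProduct_mulVec.mp hps).2 x) (Ne.symm ?_)
  rw [Ne, hps.dotProduct_mulVec_zero_iff]
  intro h0
  have hinj := Matrix.mulVec_injective_iff_isUnit.mpr hu
  exact hx (hinj (by simpa using h0))

/-- The metric space `(Sym⁺(m), d_LE)` is complete: every `d_LE`-Cauchy sequence of
symmetric positive definite matrices converges, in the metric `d_LE`, to a symmetric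
positive definite matrix. -/
theorem logEuclidean_complete (m : ℕ) (hm : 0 < m)
    (mlog : Matrix (Fin m) (Fin m) ℝ → Matrix (Fin m) (Fin m) ℝ)
    (hmlog_symm : ∀ S : Matrix (Fin m) (Fin m) ℝ, S.PosDef → (mlog S).IsSymm)
    (hmlog_exp : ∀ S : Matrix (Fin m) (Fin m) ℝ, S.PosDef → mexp (mlog S) = S)
    (dLE : Matrix (Fin m) (Fin m) ℝ → Matrix (Fin m) (Fin m) ℝ → ℝ)
    (hdLE : ∀ S₁ S₂, dLE S₁ S₂ = frobNorm (mlog S₁ - mlog S₂))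
    (S : ℕ → Matrix (Fin m) (Fin m) ℝ)
    (hSpd : ∀ n, (S n).PosDef)
    (hCauchy : ∀ ε : ℝ, 0 < ε → ∃ N : ℕ, ∀ k ≥ N, ∀ l ≥ N, dLE (S k) (S l) < ε) :
    ∃ T : Matrix (Fin m) (Fin m) ℝ, T.PosDef ∧
      Tendsto (fun n => dLE (S n) T) atTop (nhds 0) := by
  -- each entry of `mlog (S n)` is a Cauchy sequence of reals
  have hcau : ∀ i j : Fin m, CauchySeq (fun n => mlog (S n) i j) := by
    intro i j
    rw [Metric.cauchySeq_iff]
    intro ε hε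
    obtain ⟨N, hN⟩ := hCauchy ε hε
    refine ⟨N, fun k hk l hl => ?_⟩
    have h1 := hN k hk l hl
    rw [hdLE] at h1
    calc dist (mlog (S k) i j) (mlog (S l) i j)
        = |(mlog (S k) - mlog (S l)) i j| := by
          simp [Matrix.sub_apply, Real.dist_eq]
      _ ≤ frobNorm (mlog (S k) - mlog (S l)) := abs_entry_le_frobNorm _ i j
      _ < ε := h1
  have hex : ∀ i j : Fin m, ∃ a : ℝ, Tendsto (fun n => mlog (S n) i j) atTop (nhds a) :=
    fun i j => cauchySeq_tendsto_of_complete (hcau i j)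
  choose A0 hA0 using hex
  set A : Matrix (Fin m) (Fin m) ℝ := Matrix.of A0 with hAdef
  have hA : ∀ i j, Tendsto (fun n => mlog (S n) i j) atTop (nhds (A i j)) := hA0
  -- A is symmetric
  have hsymm : ∀ n (i j : Fin m), mlog (S n) j i = mlog (S n) i j := by
    intro n i j
    have h := hmlog_symm (S n) (hSpd n)
    have := congrFun (congrFun h i) j
    rwa [Matrix.transpose_apply] at this
  have hAs : A.IsSymm := by
    ext i j
    rw [Matrix.transpose_apply]
    exact tendsto_nhds_unique (hA j i) ((hA i j).congr fun n => (hsymm n i j).symm)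
  have hAh : A.IsHermitian := isSymm_isHermitian hAs
  -- the candidate limit
  have hTpd : (mexp A).PosDef := mexp_posDef hAh
  have hlogT : mlog (mexp A) = A := by
    refine mexp_injective (isSymm_isHermitian (hmlog_symm _ hTpd)) hAh ?_
    rw [hmlog_exp _ hTpd]
  refine ⟨mexp A, hTpd, ?_⟩
  -- convergence of the Frobenius norms
  have hsum : Tendsto (fun n => ∑ i, ∑ j, (mlog (S n) i j - A i j) ^ 2) atTop (nhds 0) := by
    have hterm : ∀ i j : Fin m,
        Tendsto (fun n => (mlog (S n) i j - A i j) ^ 2) atTop (nhds 0) := by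
      intro i j
      have h0 : Tendsto (fun n => mlog (S n) i j - A i j) atTop (nhds 0) := by
        simpa using (hA i j).sub (tendsto_const_nhds (x := A i j))
      simpa using h0.pow 2
    have := tendsto_finset_sum (Finset.univ : Finset (Fin m))
      (fun i _ => tendsto_finset_sum (Finset.univ : Finset (Fin m)) fun j _ => hterm i j)
    simpa using this
  have key : Tendsto (fun n => frobNorm (mlog (S n) - A)) atTop (nhds 0) := by
    have hs : Tendsto Real.sqrt (nhds 0) (nhds 0) := by
      simpa using Real.continuous_sqrt.tendsto 0
    have := hs.comp hsum
    simpa [frobNorm, Matrix.sub_apply, Function.comp_def] using this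
  have : (fun n => dLE (S n) (mexp A)) = fun n => frobNorm (mlog (S n) - A) := by
    funext n
    rw [hdLE, hlogT]
  rw [this]
  exact key
end

section
/- For any S₁, S₂ ∈ Sym⁺(m), the curve γ(t) := mexp((1−t)·mlog(S₁) + t·mlog(S₂)), t ∈ [0,1], takes values in Sym⁺(m), satisfies γ(0) = S₁ and γ(1) = S₂, and satisfies d_LE(γ(s), γ(t)) = |s − t| · d_LE(S₁, S₂) for all s, t ∈ [0,1]. Consequently (Sym⁺(m), d_LE) is a geodesic metric space. -/
open Matrix Set Polynomial

namespace LogEucAux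

variable {n : Type*} [Fintype n] [DecidableEq n]

lemma isHermitian_of_isSymm {A : Matrix n n ℝ} (h : A.IsSymm) : A.IsHermitian := by
  show Aᴴ = A
  ext i j
  rw [conjTranspose_apply, star_trivial]
  exact (congrFun (congrFun h j) i).symm

lemma conj_pow (U : Matrix.unitaryGroup n ℝ) (M : Matrix n n ℝ) (k : ℕ) :
    ((U : Matrix n n ℝ) * M * star (U : Matrix n n ℝ)) ^ k
      = (U : Matrix n n ℝ) * M ^ k * star (U : Matrix n n ℝ) := by
  have h1 : star (U : Matrix n n ℝ) * (U : Matrix n n ℝ) = 1 := U.prop.1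
  have h2 : (U : Matrix n n ℝ) * star (U : Matrix n n ℝ) = 1 := U.prop.2
  induction k with
  | zero => simp [h2]
  | succ k ih =>
    rw [pow_succ, ih, pow_succ]
    calc (U : Matrix n n ℝ) * M ^ k * star (U : Matrix n n ℝ) *
          ((U : Matrix n n ℝ) * M * star (U : Matrix n n ℝ))
        = (U : Matrix n n ℝ) * M ^ k * (star (U : Matrix n n ℝ) * (U : Matrix n n ℝ)) *
          (M * star (U : Matrix n n ℝ)) := by
          simp only [Matrix.mul_assoc]
      _ = (U : Matrix n n ℝ) * (M ^ k * M) * star (U : Matrix n n ℝ) := by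
          rw [h1, Matrix.mul_one]; simp only [Matrix.mul_assoc]

lemma aeval_conj (U : Matrix.unitaryGroup n ℝ) (M : Matrix n n ℝ) (p : ℝ[X]) :
    aeval ((U : Matrix n n ℝ) * M * star (U : Matrix n n ℝ)) p
      = (U : Matrix n n ℝ) * aeval M p * star (U : Matrix n n ℝ) := by
  induction p using Polynomial.induction_on' with
  | add p q hp hq => simp [map_add, hp, hq, Matrix.mul_add, Matrix.add_mul]
  | monomial k a =>
    rw [aeval_monomial, aeval_monomial, conj_pow]
    simp [Algebra.algebraMap_eq_smul_one, smul_mul_assoc, mul_smul_comm, Matrix.mul_assoc]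

lemma exp_conj_unitary (U : Matrix.unitaryGroup n ℝ) (M : Matrix n n ℝ) :
    NormedSpace.exp ((U : Matrix n n ℝ) * M * star (U : Matrix n n ℝ))
      = (U : Matrix n n ℝ) * NormedSpace.exp M * star (U : Matrix n n ℝ) := by
  have hU : IsUnit (U : Matrix n n ℝ) := ⟨Unitary.toUnits U, rfl⟩
  have hinv : (U : Matrix n n ℝ)⁻¹ = star (U : Matrix n n ℝ) :=
    Matrix.inv_eq_left_inv U.prop.1
  rw [← hinv, Matrix.exp_conj _ _ hU]

lemma exp_spectral {A : Matrix n n ℝ} (hA : A.IsHermitian) :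
    NormedSpace.exp A = (hA.eigenvectorUnitary : Matrix n n ℝ) *
      diagonal (Real.exp ∘ hA.eigenvalues) *
      star (hA.eigenvectorUnitary : Matrix n n ℝ) := by
  conv_lhs => rw [hA.spectral_theorem, Unitary.conjStarAlgAut_apply]
  rw [exp_conj_unitary, Matrix.exp_diagonal,
    show (NormedSpace.exp (RCLike.ofReal ∘ hA.eigenvalues : n → ℝ))
        = Real.exp ∘ hA.eigenvalues by
      funext i; rw [Pi.exp_def]; simp [← Real.exp_eq_exp_ℝ]]

lemma aeval_exp_eq {A : Matrix n n ℝ} (hA : A.IsHermitian) (p : ℝ[X])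
    (hp : ∀ i, p.eval (Real.exp (hA.eigenvalues i)) = hA.eigenvalues i) :
    aeval (NormedSpace.exp A) p = A := by
  rw [exp_spectral hA, aeval_conj]
  have hd : aeval (diagonal (Real.exp ∘ hA.eigenvalues)) p = diagonal hA.eigenvalues := by
    rw [show diagonal (Real.exp ∘ hA.eigenvalues)
        = diagonalAlgHom ℝ (Real.exp ∘ hA.eigenvalues) from rfl,
      aeval_algHom_apply]
    show Matrix.diagonal (aeval (Real.exp ∘ hA.eigenvalues) p) = _
    refine congrArg Matrix.diagonal (funext fun i => ?_)
    rw [aeval_fn_apply]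
    simpa using hp i
  rw [hd]
  conv_rhs => rw [hA.spectral_theorem]
  rw [show (RCLike.ofReal ∘ hA.eigenvalues : n → ℝ) = hA.eigenvalues from
    funext fun i => by simp]
  rw [Unitary.conjStarAlgAut_apply]

lemma exp_inj {A B : Matrix n n ℝ} (hA : A.IsHermitian) (hB : B.IsHermitian)
    (h : NormedSpace.exp A = NormedSpace.exp B) : A = B := by
  classical
  set s : Finset ℝ :=
    Finset.image hA.eigenvalues Finset.univ ∪ Finset.image hB.eigenvalues Finset.univ with hs
  set p : ℝ[X] := Lagrange.interpolate s Real.exp id with hpdef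
  have hinj : Set.InjOn Real.exp (s : Set ℝ) := Real.exp_injective.injOn
  have hp : ∀ x ∈ s, p.eval (Real.exp x) = x := fun x hx =>
    Lagrange.eval_interpolate_at_node id hinj hx
  have e1 : aeval (NormedSpace.exp A) p = A :=
    aeval_exp_eq hA p fun i => hp _ (Finset.mem_union_left _
      (Finset.mem_image_of_mem _ (Finset.mem_univ i)))
  have e2 : aeval (NormedSpace.exp B) p = B :=
    aeval_exp_eq hB p fun i => hp _ (Finset.mem_union_right _
      (Finset.mem_image_of_mem _ (Finset.mem_univ i)))
  rw [← e1, ← e2, h]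

lemma exp_posDef {A : Matrix n n ℝ} (hA : A.IsSymm) :
    (NormedSpace.exp A).PosDef := by
  set B := NormedSpace.exp ((1 / 2 : ℝ) • A) with hBdef
  have hAsmul : ((1 / 2 : ℝ) • A).IsSymm := by
    show ((1 / 2 : ℝ) • A)ᵀ = _
    rw [Matrix.transpose_smul, hA]
  have hBsymm : ((1 / 2 : ℝ) • A).IsHermitian := isHermitian_of_isSymm hAsmul
  have hBT : Bᴴ = B := by
    rw [hBdef, ← Matrix.exp_conjTranspose, hBsymm.eq]
  have hexp : NormedSpace.exp A = Bᴴ * B := by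
    rw [hBT, hBdef, ← Matrix.exp_add_of_commute _ _ (Commute.refl _), ← add_smul]
    norm_num
  rw [Matrix.posDef_iff_dotProduct_mulVec]
  constructor
  · exact (isHermitian_of_isSymm hA).exp
  · intro x hx
    have hunit : IsUnit B := Matrix.isUnit_exp _
    have hBx : B *ᵥ x ≠ 0 := by
      intro h0
      exact hx ((Matrix.mulVec_injective_iff_isUnit.mpr hunit)
        (by simpa using h0))
    have key : star x ⬝ᵥ (NormedSpace.exp A *ᵥ x) = star (B *ᵥ x) ⬝ᵥ (B *ᵥ x) := by
      rw [hexp, ← Matrix.mulVec_mulVec, Matrix.star_mulVec, Matrix.dotProduct_mulVec]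
    rw [key]
    exact Matrix.dotProduct_star_self_pos_iff.mpr hBx

end LogEucAux

lemma LogEucAux.frobNorm_smul {m : ℕ} (c : ℝ) (A : Matrix (Fin m) (Fin m) ℝ) :
    Real.sqrt (∑ i, ∑ j, ((c • A) i j) ^ 2) = |c| * Real.sqrt (∑ i, ∑ j, (A i j) ^ 2) := by
  rw [← Real.sqrt_sq_eq_abs, ← Real.sqrt_mul (sq_nonneg c), Finset.mul_sum]
  congr 1
  refine Finset.sum_congr rfl fun i _ => ?_
  rw [Finset.mul_sum]
  refine Finset.sum_congr rfl fun j _ => ?_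
  simp [mul_pow]


/-- For any `S₁, S₂ ∈ Sym⁺(m)`, the curve `γ(t) := mexp((1−t)·mlog S₁ + t·mlog S₂)`,
`t ∈ [0,1]`, takes values in `Sym⁺(m)`, satisfies `γ(0) = S₁` and `γ(1) = S₂`, and satisfies
`d_LE(γ(s), γ(t)) = |s − t| · d_LE(S₁, S₂)` for all `s, t ∈ [0,1]`.  Consequently
`(Sym⁺(m), d_LE)` is a geodesic metric space. -/
theorem logEuclidean_geodesic (m : ℕ) (hm : 0 < m)
    (mlog : Matrix (Fin m) (Fin m) ℝ → Matrix (Fin m) (Fin m) ℝ)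
    (hmlog_symm : ∀ S : Matrix (Fin m) (Fin m) ℝ, S.PosDef → (mlog S).IsSymm)
    (hmlog_exp : ∀ S : Matrix (Fin m) (Fin m) ℝ, S.PosDef → mexp (mlog S) = S)
    (dLE : Matrix (Fin m) (Fin m) ℝ → Matrix (Fin m) (Fin m) ℝ → ℝ)
    (hdLE : ∀ S₁ S₂, dLE S₁ S₂ = frobNorm (mlog S₁ - mlog S₂))
    (S₁ S₂ : Matrix (Fin m) (Fin m) ℝ) (hS₁ : S₁.PosDef) (hS₂ : S₂.PosDef)
    (γ : ℝ → Matrix (Fin m) (Fin m) ℝ)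
    (hγ : ∀ t : ℝ, γ t = mexp ((1 - t) • mlog S₁ + t • mlog S₂)) :
    (∀ t ∈ Icc (0 : ℝ) 1, (γ t).PosDef) ∧
    γ 0 = S₁ ∧ γ 1 = S₂ ∧
    (∀ s ∈ Icc (0 : ℝ) 1, ∀ t ∈ Icc (0 : ℝ) 1,
      dLE (γ s) (γ t) = |s - t| * dLE S₁ S₂) := by
  simp only [mexp] at hmlog_exp hγ
  have hL : ∀ t : ℝ, ((1 - t) • mlog S₁ + t • mlog S₂).IsSymm := by
    intro t
    show _ᵀ = _
    rw [Matrix.transpose_add, Matrix.transpose_smul, Matrix.transpose_smul,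
      hmlog_symm S₁ hS₁, hmlog_symm S₂ hS₂]
  have hpos : ∀ t : ℝ, (γ t).PosDef := by
    intro t; rw [hγ t]; exact LogEucAux.exp_posDef (hL t)
  have hmlogγ : ∀ t : ℝ, mlog (γ t) = (1 - t) • mlog S₁ + t • mlog S₂ := by
    intro t
    apply LogEucAux.exp_inj (LogEucAux.isHermitian_of_isSymm (hmlog_symm _ (hpos t)))
      (LogEucAux.isHermitian_of_isSymm (hL t))
    rw [hmlog_exp _ (hpos t), hγ t]
  refine ⟨fun t _ => hpos t, ?_, ?_, ?_⟩
  · rw [hγ 0, show (1 - (0:ℝ)) • mlog S₁ + (0:ℝ) • mlog S₂ = mlog S₁ by simp,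
      hmlog_exp S₁ hS₁]
  · rw [hγ 1, show (1 - (1:ℝ)) • mlog S₁ + (1:ℝ) • mlog S₂ = mlog S₂ by simp,
      hmlog_exp S₂ hS₂]
  · intro s _ t _
    have hdiff : ((1 - s) • mlog S₁ + s • mlog S₂) - ((1 - t) • mlog S₁ + t • mlog S₂)
        = (t - s) • (mlog S₁ - mlog S₂) := by
      module
    rw [hdLE (γ s) (γ t), hdLE S₁ S₂, hmlogγ s, hmlogγ t, hdiff]
    simp only [frobNorm]
    rw [LogEucAux.frobNorm_smul, abs_sub_comm]
end

section
/- The function d_LC(S₁, S₂) := ‖chol(L(S₁)) − chol(L(S₂))‖_F is a metric on Sym⁺(m), the map S ↦ chol(L(S)) is an isometric bijection from (Sym⁺(m), d_LC) onto the real vector space of m×m lower triangular matrices equipped with the Frobenius norm, and (Sym⁺(m), d_LC) is a complete metric space. -/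
open Matrix Filter

/-- For a lower triangular matrix `L`, `chol(L) := ⌊L⌋ + mlog(𝔻(L))` is the sum of the strictly
lower triangular part of `L` and the diagonal matrix whose `k`-th diagonal entry is
`log(L k k)`. -/
noncomputable def cholMap {m : ℕ} (L : Matrix (Fin m) (Fin m) ℝ) : Matrix (Fin m) (Fin m) ℝ :=
  Matrix.of fun i j => if j < i then L i j else if i = j then Real.log (L i i) else 0

-- embedding into EuclideanSpace
noncomputable def toE {m : ℕ} (A : Matrix (Fin m) (Fin m) ℝ) :
    EuclideanSpace ℝ (Fin m × Fin m) := WithLp.toLp 2 (fun p : Fin m × Fin m => A p.1 p.2)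

lemma frob_eq {m : ℕ} (A : Matrix (Fin m) (Fin m) ℝ) : frobNorm A = ‖toE A‖ := by
  rw [EuclideanSpace.norm_eq, frobNorm]
  congr 1
  rw [Fintype.sum_prod_type]
  simp [toE, Real.norm_eq_abs, sq_abs]

lemma toE_sub {m : ℕ} (A B : Matrix (Fin m) (Fin m) ℝ) : toE (A - B) = toE A - toE B := rfl

lemma toE_inj {m : ℕ} {A B : Matrix (Fin m) (Fin m) ℝ} (h : toE A = toE B) : A = B := by
  ext i j; exact congrArg (fun v : EuclideanSpace ℝ (Fin m × Fin m) => v (i, j)) h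

lemma coord_le {m : ℕ} (v : EuclideanSpace ℝ (Fin m × Fin m)) (p : Fin m × Fin m) :
    |v p| ≤ ‖v‖ := by
  rw [EuclideanSpace.norm_eq]
  rw [← Real.sqrt_sq (abs_nonneg (v p))]
  have h1 : |v p| ^ 2 ≤ ∑ q : Fin m × Fin m, ‖v q‖ ^ 2 := by
    have : |v p| ^ 2 = ‖v p‖ ^ 2 := by rw [Real.norm_eq_abs]
    rw [this]
    exact Finset.single_le_sum (f := fun q => ‖v q‖ ^ 2) (fun q _ => sq_nonneg _)
      (Finset.mem_univ p)
  exact Real.sqrt_le_sqrt h1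

lemma sum_lower {m : ℕ} (j : Fin m) (f : Fin m → ℝ) (hf : ∀ k, j < k → f k = 0) :
    ∑ k, f k = (∑ k ∈ Finset.Iio j, f k) + f j := by
  rw [← Finset.sum_subset (Finset.subset_univ (Finset.Iic j))
    (fun k _ hk => hf k (by simpa using hk))]
  rw [← Finset.Iio_insert, Finset.sum_insert (by simp)]
  ring

lemma chol_unique {m : ℕ} (L M : Matrix (Fin m) (Fin m) ℝ)
    (hL0 : ∀ i j, i < j → L i j = 0) (hLd : ∀ i, 0 < L i i)
    (hM0 : ∀ i j, i < j → M i j = 0) (hMd : ∀ i, 0 < M i i)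
    (h : L * Lᵀ = M * Mᵀ) : L = M := by
  have main : ∀ n : ℕ, ∀ j : Fin m, (j : ℕ) = n → ∀ i, L i j = M i j := by
    intro n
    induction n using Nat.strongRecOn with
    | ind n IHn =>
      intro j hj
      have IH : ∀ k : Fin m, k < j → ∀ i, L i k = M i k := by
        intro k hk i
        exact IHn k.val (by rw [← hj]; exact Fin.lt_def.mp hk) k rfl i
      have hdiag : L j j = M j j := by
        have hjj := congrFun (congrFun h j) j
        simp only [mul_apply, transpose_apply] at hjj
        rw [sum_lower j _ (fun k hk => by rw [hL0 j k hk]; ring),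
            sum_lower j _ (fun k hk => by rw [hM0 j k hk]; ring)] at hjj
        have hsum : ∀ k ∈ Finset.Iio j, L j k * L j k = M j k * M j k := by
          intro k hk
          rw [IH k (Finset.mem_Iio.mp hk)]
        rw [Finset.sum_congr rfl hsum] at hjj
        have h2 : L j j * L j j = M j j * M j j := by linarith
        nlinarith [hLd j, hMd j]
      intro i
      rcases lt_trichotomy i j with hij | hij | hij
      · rw [hL0 i j hij, hM0 i j hij]
      · rw [hij]; exact hdiag
      · have hijh := congrFun (congrFun h i) j
        simp only [mul_apply, transpose_apply] at hijh
        rw [sum_lower j _ (fun k hk => by rw [hL0 j k hk]; ring),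
            sum_lower j _ (fun k hk => by rw [hM0 j k hk]; ring)] at hijh
        have hsum : ∀ k ∈ Finset.Iio j, L i k * L j k = M i k * M j k := by
          intro k hk
          rw [IH k (Finset.mem_Iio.mp hk) i, IH k (Finset.mem_Iio.mp hk) j]
        rw [Finset.sum_congr rfl hsum] at hijh
        have h2 : L i j * L j j = M i j * M j j := by linarith
        rw [← hdiag] at h2
        exact mul_right_cancel₀ (ne_of_gt (hLd j)) h2
  ext i j
  exact main j.val j rfl i

lemma lower_det_pos {m : ℕ} (L : Matrix (Fin m) (Fin m) ℝ)
    (hL0 : ∀ i j, i < j → L i j = 0) (hLd : ∀ i, 0 < L i i) : 0 < L.det := by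
  have : L.BlockTriangular OrderDual.toDual := by
    intro i j hij
    exact hL0 i j hij
  rw [Matrix.det_of_lowerTriangular L this]
  exact Finset.prod_pos fun i _ => hLd i

lemma lowerPosDef {m : ℕ} (L : Matrix (Fin m) (Fin m) ℝ)
    (hL0 : ∀ i j, i < j → L i j = 0) (hLd : ∀ i, 0 < L i i) : (L * Lᵀ).PosDef := by
  rw [posDef_iff_dotProduct_mulVec]
  constructor
  · unfold Matrix.IsHermitian
    rw [conjTranspose_eq_transpose_of_trivial, transpose_mul, transpose_transpose]
  · intro x hx
    have hdet : Lᵀ.det ≠ 0 := by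
      rw [det_transpose]; exact ne_of_gt (lower_det_pos L hL0 hLd)
    have hy : Lᵀ *ᵥ x ≠ 0 := by
      intro hc
      exact hx (eq_zero_of_mulVec_eq_zero hdet hc)
    have key : star x ⬝ᵥ ((L * Lᵀ) *ᵥ x) = (Lᵀ *ᵥ x) ⬝ᵥ (Lᵀ *ᵥ x) := by
      rw [star_trivial, ← mulVec_mulVec, dotProduct_mulVec, mulVec_transpose]
    rw [key]
    rcases lt_or_eq_of_le (Finset.sum_nonneg fun i _ => mul_self_nonneg ((Lᵀ *ᵥ x) i)) with h | h
    · exact h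
    · exact absurd (dotProduct_self_eq_zero.mp h.symm) hy

lemma cholMap_lower {m : ℕ} (L : Matrix (Fin m) (Fin m) ℝ) (i j : Fin m) (hij : i < j) :
    cholMap L i j = 0 := by
  simp [cholMap, lt_asymm hij, hij.ne]

lemma cholMap_inj {m : ℕ} {L₁ L₂ : Matrix (Fin m) (Fin m) ℝ}
    (h0₁ : ∀ i j, i < j → L₁ i j = 0) (hd₁ : ∀ i, 0 < L₁ i i)
    (h0₂ : ∀ i j, i < j → L₂ i j = 0) (hd₂ : ∀ i, 0 < L₂ i i)
    (h : cholMap L₁ = cholMap L₂) : L₁ = L₂ := by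
  ext i j
  have hij := congrFun (congrFun h i) j
  simp only [cholMap, Matrix.of_apply] at hij
  rcases lt_trichotomy j i with hlt | heq | hgt
  · rw [if_pos hlt, if_pos hlt] at hij
    exact hij
  · subst heq
    rw [if_neg (lt_irrefl j), if_neg (lt_irrefl j), if_pos rfl, if_pos rfl] at hij
    have := congrArg Real.exp hij
    rwa [Real.exp_log (hd₁ j), Real.exp_log (hd₂ j)] at this
  · rw [h0₁ i j hgt, h0₂ i j hgt]


/-- `d_LC(S₁,S₂) := ‖chol(L(S₁)) − chol(L(S₂))‖_F` is a metric on `Sym⁺(m)` (where `L(S)` is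
the Cholesky factor of `S`), the map `S ↦ chol(L(S))` is an isometric bijection from
`(Sym⁺(m), d_LC)` onto the real vector space of `m × m` lower triangular matrices equipped
with the Frobenius norm, and `(Sym⁺(m), d_LC)` is a complete metric space. -/
theorem logCholesky_metric_complete (m : ℕ) (hm : 0 < m)
    (Lfac : Matrix (Fin m) (Fin m) ℝ → Matrix (Fin m) (Fin m) ℝ)
    (hLfac_lower : ∀ S : Matrix (Fin m) (Fin m) ℝ, S.PosDef →
      ∀ i j : Fin m, i < j → Lfac S i j = 0)
    (hLfac_diag : ∀ S : Matrix (Fin m) (Fin m) ℝ, S.PosDef → ∀ i : Fin m, 0 < Lfac S i i)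
    (hLfac_mul : ∀ S : Matrix (Fin m) (Fin m) ℝ, S.PosDef → S = Lfac S * (Lfac S)ᵀ)
    (dLC : Matrix (Fin m) (Fin m) ℝ → Matrix (Fin m) (Fin m) ℝ → ℝ)
    (hdLC : ∀ S₁ S₂, dLC S₁ S₂ = frobNorm (cholMap (Lfac S₁) - cholMap (Lfac S₂))) :
    -- d_LC is a metric on Sym⁺(m):
    (∀ S₁ S₂ : Matrix (Fin m) (Fin m) ℝ, S₁.PosDef → S₂.PosDef → 0 ≤ dLC S₁ S₂) ∧
    (∀ S₁ S₂ : Matrix (Fin m) (Fin m) ℝ, S₁.PosDef → S₂.PosDef →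
      (dLC S₁ S₂ = 0 ↔ S₁ = S₂)) ∧
    (∀ S₁ S₂ : Matrix (Fin m) (Fin m) ℝ, S₁.PosDef → S₂.PosDef → dLC S₁ S₂ = dLC S₂ S₁) ∧
    (∀ S₁ S₂ S₃ : Matrix (Fin m) (Fin m) ℝ, S₁.PosDef → S₂.PosDef → S₃.PosDef →
      dLC S₁ S₃ ≤ dLC S₁ S₂ + dLC S₂ S₃) ∧
    -- S ↦ chol(L(S)) is an isometry onto the space of lower triangular matrices:
    (∀ S₁ S₂ : Matrix (Fin m) (Fin m) ℝ, S₁.PosDef → S₂.PosDef →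
      dLC S₁ S₂ = frobNorm (cholMap (Lfac S₁) - cholMap (Lfac S₂))) ∧
    (∀ S : Matrix (Fin m) (Fin m) ℝ, S.PosDef →
      ∀ i j : Fin m, i < j → cholMap (Lfac S) i j = 0) ∧
    -- it is injective on Sym⁺(m) and surjective onto lower triangular matrices:
    (∀ S₁ S₂ : Matrix (Fin m) (Fin m) ℝ, S₁.PosDef → S₂.PosDef →
      cholMap (Lfac S₁) = cholMap (Lfac S₂) → S₁ = S₂) ∧
    (∀ T : Matrix (Fin m) (Fin m) ℝ, (∀ i j : Fin m, i < j → T i j = 0) →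
      ∃ S : Matrix (Fin m) (Fin m) ℝ, S.PosDef ∧ cholMap (Lfac S) = T) ∧
    -- completeness: every d_LC-Cauchy sequence in Sym⁺(m) converges in Sym⁺(m)
    (∀ S : ℕ → Matrix (Fin m) (Fin m) ℝ, (∀ n, (S n).PosDef) →
      (∀ ε : ℝ, 0 < ε → ∃ N : ℕ, ∀ k ≥ N, ∀ l ≥ N, dLC (S k) (S l) < ε) →
      ∃ T : Matrix (Fin m) (Fin m) ℝ, T.PosDef ∧
        Tendsto (fun n => dLC (S n) T) atTop (nhds 0)) := by
  -- distance in terms of the Euclidean norm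
  have hd : ∀ S₁ S₂, dLC S₁ S₂ = ‖toE (cholMap (Lfac S₁)) - toE (cholMap (Lfac S₂))‖ := by
    intro S₁ S₂
    rw [hdLC, frob_eq, toE_sub]
  -- injectivity on PosDef
  have hinj : ∀ S₁ S₂ : Matrix (Fin m) (Fin m) ℝ, S₁.PosDef → S₂.PosDef →
      cholMap (Lfac S₁) = cholMap (Lfac S₂) → S₁ = S₂ := by
    intro S₁ S₂ h₁ h₂ hch
    have hLL : Lfac S₁ = Lfac S₂ :=
      cholMap_inj (hLfac_lower S₁ h₁) (hLfac_diag S₁ h₁)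
        (hLfac_lower S₂ h₂) (hLfac_diag S₂ h₂) hch
    rw [hLfac_mul S₁ h₁, hLfac_mul S₂ h₂, hLL]
  -- surjectivity onto lower triangular matrices
  have hsurj : ∀ T : Matrix (Fin m) (Fin m) ℝ, (∀ i j : Fin m, i < j → T i j = 0) →
      ∃ S : Matrix (Fin m) (Fin m) ℝ, S.PosDef ∧ cholMap (Lfac S) = T := by
    intro T hT
    set L : Matrix (Fin m) (Fin m) ℝ :=
      Matrix.of fun i j => if i = j then Real.exp (T i i) else T i j with hLdef
    have hL0 : ∀ i j, i < j → L i j = 0 := by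
      intro i j hij
      simp [hLdef, hij.ne, hT i j hij]
    have hLd : ∀ i, 0 < L i i := by
      intro i
      simp [hLdef, Real.exp_pos]
    refine ⟨L * Lᵀ, lowerPosDef L hL0 hLd, ?_⟩
    have hS : (L * Lᵀ).PosDef := lowerPosDef L hL0 hLd
    have hLeq : Lfac (L * Lᵀ) = L :=
      chol_unique _ _ (hLfac_lower _ hS) (hLfac_diag _ hS) hL0 hLd
        (hLfac_mul _ hS).symm
    rw [hLeq]
    ext i j
    rcases lt_trichotomy j i with hlt | heq | hgt
    · simp [cholMap, hLdef, if_pos hlt, hlt.ne']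
    · subst heq
      simp [cholMap, hLdef, Real.log_exp]
    · rw [cholMap_lower L i j hgt, hT i j hgt]
  refine ⟨?_, ?_, ?_, ?_, ?_, ?_, hinj, hsurj, ?_⟩
  · intro S₁ S₂ _ _
    rw [hdLC]
    exact Real.sqrt_nonneg _
  · intro S₁ S₂ h₁ h₂
    constructor
    · intro h0
      rw [hd] at h0
      have := sub_eq_zero.mp (norm_eq_zero.mp h0)
      exact hinj S₁ S₂ h₁ h₂ (toE_inj this)
    · intro h
      rw [h, hd, sub_self, norm_zero]
  · intro S₁ S₂ _ _
    rw [hd, hd, norm_sub_rev]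
  · intro S₁ S₂ S₃ _ _ _
    rw [hd, hd, hd]
    exact norm_sub_le_norm_sub_add_norm_sub _ _ _
  · intro S₁ S₂ _ _
    exact hdLC S₁ S₂
  · intro S hS i j hij
    exact cholMap_lower _ i j hij
  · -- completeness
    intro S hS hCauchy
    set u : ℕ → EuclideanSpace ℝ (Fin m × Fin m) := fun n => toE (cholMap (Lfac (S n)))
      with hu_def
    have hu : CauchySeq u := by
      rw [Metric.cauchySeq_iff]
      intro ε hε
      obtain ⟨N, hN⟩ := hCauchy ε hε
      refine ⟨N, fun k hk l hl => ?_⟩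
      have := hN k hk l hl
      rwa [hd, ← dist_eq_norm] at this
    obtain ⟨x, hx⟩ := cauchySeq_tendsto_of_complete hu
    have hcoord : ∀ p : Fin m × Fin m, Tendsto (fun n => u n p) atTop (nhds (x p)) := by
      intro p
      rw [tendsto_iff_dist_tendsto_zero]
      refine squeeze_zero (fun n => dist_nonneg) (fun n => ?_)
        (tendsto_iff_dist_tendsto_zero.mp hx)
      rw [Real.dist_eq, dist_eq_norm]
      exact coord_le (u n - x) p
    set T₀ : Matrix (Fin m) (Fin m) ℝ := Matrix.of fun i j => x (i, j) with hT₀def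
    have hT₀E : toE T₀ = x := by
      rfl
    have hT₀lower : ∀ i j : Fin m, i < j → T₀ i j = 0 := by
      intro i j hij
      have hconst : Tendsto (fun n => u n (i, j)) atTop (nhds 0) := by
        have : (fun n => u n (i, j)) = fun _ => (0 : ℝ) := by
          funext n
          exact cholMap_lower (Lfac (S n)) i j hij
        rw [this]
        exact tendsto_const_nhds
      exact (tendsto_nhds_unique (hcoord (i, j)) hconst).symm ▸ rfl
    obtain ⟨T, hT, hTchol⟩ := hsurj T₀ hT₀lower
    refine ⟨T, hT, ?_⟩
    have : (fun n => dLC (S n) T) = fun n => dist (u n) x := by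
      funext n
      rw [hd, hTchol, hT₀E, dist_eq_norm]
    rw [this]
    exact tendsto_iff_dist_tendsto_zero.mp hx
end
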